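/- The sequence ᾱ_m/m converges as m → ∞, its limit is finite, and the limit equals sup_{m≥1} ᾱ_m/m. -/

import Mathlib

open Filter Finset

/-- A letter of the alphabet `{1,2,3}`. -/
abbrev Letter := Fin 3

/-- A word: a finite (possibly empty) sequence of letters. -/
abbrev Word := List Letter

/-- Adjacency of two words: `σ ≠ τ`, and writing `σ = β ++ σ'`, `τ = β ++ τ'` with `β`
the longest common prefix, either one of `σ'`, `τ'` is empty and the other uses at most two
distinct letters, or `σ' = i j^k` and `τ' = j i^{k'}` for distinct letters `i ≠ j`. -/
def WordAdj (σ τ : Word) : Prop :=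
  σ ≠ τ ∧ ∃ β σ' τ' : Word,
    σ = β ++ σ' ∧ τ = β ++ τ' ∧
    ((σ' = [] ∧ τ'.toFinset.card ≤ 2) ∨
     (τ' = [] ∧ σ'.toFinset.card ≤ 2) ∨
     (∃ (i j : Letter) (k k' : ℕ), i ≠ j ∧
        σ' = i :: List.replicate k j ∧ τ' = j :: List.replicate k' i))

/-- The graph `G_t`: vertices are the words of length at most `t` (all other words are
isolated), with adjacency `WordAdj`. -/
def Gt (t : ℕ) : SimpleGraph Word where
  Adj σ τ := σ.length ≤ t ∧ τ.length ≤ t ∧ WordAdj σ τ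
  symm := by
    refine ⟨?_⟩
    rintro σ τ ⟨h1, h2, hne, β, σ', τ', e1, e2, h3⟩
    refine ⟨h2, h1, hne.symm, β, τ', σ', e2, e1, ?_⟩
    rcases h3 with h | h | ⟨i, j, k, k', hij, hs, ht⟩
    · exact Or.inr (Or.inl h)
    · exact Or.inl h
    · exact Or.inr (Or.inr ⟨j, i, k', k, hij.symm, ht, hs⟩)
  loopless := ⟨fun σ h => h.2.2.1 rfl⟩

/-- `dW t σ τ` is the geodesic distance `d_t(σ,τ)` in the graph `G_t`. -/
noncomputable def dW (t : ℕ) (σ τ : Word) : ℕ := (Gt t).dist σ τ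

/-- Length of the longest suffix of `σ` using at most two distinct letters. -/
def suffLen (σ : Word) : ℕ :=
  Nat.findGreatest (fun m => (σ.drop (σ.length - m)).toFinset.card ≤ 2) σ.length

/-- `fW σ = τ₂` where `σ = τ₂τ₁` and `τ₁` is the longest suffix of `σ` using at most two
distinct letters; `fW [] = []`. -/
def fW (σ : Word) : Word := σ.take (σ.length - suffLen σ)

/-- `ω(σ)`: the least `n ≥ 0` with `f^[n] σ = ∅`. -/
noncomputable def omegaW (σ : Word) : ℕ := sInf {n : ℕ | fW^[n] σ = []}

/-- `L(σ) = d_{|σ|}(σ, ∅) - 1` for nonempty `σ`, and `L(∅) = 0`. -/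
noncomputable def Lw (σ : Word) : ℕ := if σ = [] then 0 else dW σ.length σ [] - 1

/-- `ᾱ_m`: the average of `L` over the `3^m` words of length `m`. -/
noncomputable def alphaBar (m : ℕ) : ℝ :=
  (∑ v : Fin m → Letter, (Lw (List.ofFn v) : ℝ)) / 3 ^ m

/-- `α* = sup_{m ≥ 1} ᾱ_m / m`. -/
noncomputable def alphaStar : ℝ :=
  sSup {x : ℝ | ∃ m : ℕ, 1 ≤ m ∧ x = alphaBar m / m}

/-- `#V_t = (3^{t+1} - 1)/2`, the number of vertices of `G_t`, as a real number. -/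
noncomputable def Nv (t : ℕ) : ℝ := ((3 : ℝ) ^ (t + 1) - 1) / 2

/-- The sum of `d_t(σ,τ)` over all ordered pairs of words `σ, τ ∈ V_t`
(twice the sum over unordered pairs of distinct words). -/
noncomputable def pairSum (t : ℕ) : ℝ :=
  ∑ k ∈ range (t + 1), ∑ l ∈ range (t + 1),
    ∑ v : Fin k → Letter, ∑ w : Fin l → Letter,
      (dW t (List.ofFn v) (List.ofFn w) : ℝ)

/-- The average path length `D̄(t)` of `G_t`. -/
noncomputable def Dbar (t : ℕ) : ℝ := pairSum t / (Nv t * (Nv t - 1))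

/-- `κ_t = (Σ_{σ ∈ V_t} L(σ)) / #V_t`. -/
noncomputable def kappa (t : ℕ) : ℝ :=
  (∑ k ∈ range (t + 1), ∑ v : Fin k → Letter, (Lw (List.ofFn v) : ℝ)) / Nv t

/-- `π_t`: the sum of `d_t(σ,τ)` over unordered pairs of distinct `σ, τ ∈ V_t`. -/
noncomputable def piT (t : ℕ) : ℝ := pairSum t / 2

/-- `μ_t`: the sum of `d_t(σ,τ)` over unordered pairs of distinct `σ, τ ∈ V_t`
having the same first letter. -/
noncomputable def muT (t : ℕ) : ℝ :=
  (∑ i : Letter, ∑ k ∈ range t, ∑ l ∈ range t,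
    ∑ v : Fin k → Letter, ∑ w : Fin l → Letter,
      (dW t (i :: List.ofFn v) (i :: List.ofFn w) : ℝ)) / 2

/-- `λ_t = Σ_{σ ∈ V_t, σ ≠ ∅} d_t(σ, ∅)`. -/
noncomputable def lambdaT (t : ℕ) : ℝ :=
  ∑ k ∈ Finset.Icc 1 t, ∑ v : Fin k → Letter, (dW t (List.ofFn v) [] : ℝ)

/-- `ν_t = Σ_{i<j} Σ_{|σ'|,|τ'| ≤ t-1} d_t(iσ', jτ')`. -/
noncomputable def nuT (t : ℕ) : ℝ :=
  ∑ i : Letter, ∑ j : Letter,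
    if i < j then
      ∑ k ∈ range t, ∑ l ∈ range t,
        ∑ v : Fin k → Letter, ∑ w : Fin l → Letter,
          (dW t (i :: List.ofFn v) (j :: List.ofFn w) : ℝ)
    else 0

/-- `IsNormalDecomp σ τs`: `τs = [τ₁, …, τ_l]` (with `l ≥ 1`) is a normal decomposition
of `σ`: `σ = τ₁⋯τ_l`; `#τ₁ ≤ 2`, `|τ₁| ≥ 1`; `#τ_i = 2`, `|τ_i| ≥ 2` for `i ≥ 2`; and for
`i < l` the last letter of `τ_i` is the unique letter of the alphabet not appearing
in `τ_{i+1}`. -/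
def IsNormalDecomp (σ : Word) (τs : List Word) : Prop :=
  σ = τs.flatten ∧ τs ≠ [] ∧
  (∀ i : Fin τs.length,
    (i.1 = 0 → 1 ≤ (τs.get i).length ∧ (τs.get i).toFinset.card ≤ 2) ∧
    (1 ≤ i.1 → 2 ≤ (τs.get i).length ∧ (τs.get i).toFinset.card = 2)) ∧
  (∀ i : ℕ, ∀ h : i + 1 < τs.length,
    ∃ c : Letter, (τs.get ⟨i, Nat.lt_of_succ_lt h⟩).getLast? = some c ∧
      c ∉ (τs.get ⟨i + 1, h⟩).toFinset ∧
      ∀ c' : Letter, c' ∉ (τs.get ⟨i + 1, h⟩).toFinset → c' = c)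

/-- `W_{k₁⋯k_l}`: the number of words of length `k₁ + ⋯ + k_l` admitting a normal
decomposition into blocks of lengths `k₁, …, k_l`. -/
noncomputable def Wcount (ks : List ℕ) : ℕ :=
  Nat.card {σ : Word // ∃ τs : List Word, IsNormalDecomp σ τs ∧ τs.map List.length = ks}

/-- `Ē(t) = 3^{-t} Σ_{q ≥ 1} Σ_{k₁ ≥ 1, k₂,…,k_q ≥ 2, k₁+⋯+k_q = t} (q-1)·W_{k₁⋯k_q}`. -/
noncomputable def Ebar (t : ℕ) : ℝ :=
  ((∑ c : Composition t,
      if ∀ i ∈ c.blocks.tail, 2 ≤ i then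
        (c.blocks.length - 1) * Wcount c.blocks
      else 0 : ℕ) : ℝ) / 3 ^ t


namespace AlphaAux

open SimpleGraph List

/-- The set of lengths of decompositions of `σ` into blocks each using at most two letters. -/
def decompSet (σ : Word) : Set ℕ :=
  {l | ∃ τs : List Word, τs.length = l ∧ τs.flatten = σ ∧ ∀ τ ∈ τs, τ.toFinset.card ≤ 2}

noncomputable def bW (σ : Word) : ℕ := sInf (decompSet σ)

lemma decompSet_nonempty (σ : Word) : σ.length ∈ decompSet σ := by
  refine ⟨σ.map (fun a => [a]), by simp, ?_, ?_⟩
  · induction σ with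
    | nil => simp
    | cons a l ih => simp [ih]
  · intro τ hτ
    simp only [List.mem_map] at hτ
    obtain ⟨a, -, rfl⟩ := hτ
    simp

lemma bW_mem (σ : Word) : bW σ ∈ decompSet σ :=
  Nat.sInf_mem ⟨σ.length, decompSet_nonempty σ⟩

lemma bW_le {σ : Word} {τs : List Word} (h1 : τs.flatten = σ)
    (h2 : ∀ τ ∈ τs, τ.toFinset.card ≤ 2) : bW σ ≤ τs.length :=
  Nat.sInf_le ⟨τs, rfl, h1, h2⟩

lemma bW_le_length (σ : Word) : bW σ ≤ σ.length :=
  Nat.sInf_le (decompSet_nonempty σ)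

lemma bW_nil : bW ([] : Word) = 0 :=
  Nat.le_zero.1 (bW_le (τs := []) rfl (by simp))

lemma bW_single {σ : Word} (h : σ.toFinset.card ≤ 2) : bW σ ≤ 1 :=
  bW_le (τs := [σ]) (by simp) (by simpa using h)

lemma bW_append (σ τ : Word) : bW (σ ++ τ) ≤ bW σ + bW τ := by
  obtain ⟨τs1, h1, h2, h3⟩ := bW_mem σ
  obtain ⟨τs2, g1, g2, g3⟩ := bW_mem τ
  have := bW_le (σ := σ ++ τ) (τs := τs1 ++ τs2) (by simp [h2, g2]) (by
    intro x hx; rcases List.mem_append.1 hx with hx | hx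
    exacts [h3 x hx, g3 x hx])
  simpa [h1, g1] using this

lemma take_decomp : ∀ (τs : List Word) (n : ℕ), ∃ τs' : List Word,
    τs'.length = τs.length ∧ τs'.flatten = τs.flatten.take n ∧
    ∀ τ' ∈ τs', ∃ τ ∈ τs, τ' <+: τ
  | [], n => ⟨[], rfl, by simp, by simp⟩
  | t :: rest, n => by
    by_cases h : n ≤ t.length
    · refine ⟨t.take n :: rest.map (fun _ => ([] : Word)), by simp, ?_, ?_⟩
      · have hz : n - t.length = 0 := by omega
        have hflat : (rest.map (fun _ => ([] : Word))).flatten = [] := by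
          induction rest with
          | nil => simp
          | cons a l ih => simpa using ih
        simp [List.take_append, hz, hflat]
      · rintro τ' hτ'
        rcases List.mem_cons.1 hτ' with rfl | h'
        · exact ⟨t, List.mem_cons_self, List.take_prefix _ _⟩
        · obtain ⟨a, ha, rfl⟩ := List.mem_map.1 h'
          exact ⟨t, List.mem_cons_self, List.nil_prefix⟩
    · obtain ⟨τs', h1, h2, h3⟩ := take_decomp rest (n - t.length)
      refine ⟨t :: τs', by simp [h1], ?_, ?_⟩
      · have ht : t.take n = t := List.take_of_length_le (by omega)
        simp [List.take_append, ht, h2]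
      · rintro τ' hτ'
        rcases List.mem_cons.1 hτ' with rfl | h'
        · exact ⟨τ', List.mem_cons_self, List.prefix_refl _⟩
        · obtain ⟨τ, hτ, hp⟩ := h3 τ' h'
          exact ⟨τ, List.mem_cons_of_mem _ hτ, hp⟩

lemma card_le_of_prefix {τ' τ : Word} (h : τ' <+: τ) :
    τ'.toFinset.card ≤ τ.toFinset.card :=
  Finset.card_le_card (fun x hx => List.mem_toFinset.2 (h.subset (List.mem_toFinset.1 hx)))

lemma bW_prefix (β γ : Word) : bW β ≤ bW (β ++ γ) := by
  obtain ⟨τs, hlen, hflat, hgood⟩ := bW_mem (β ++ γ)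
  obtain ⟨τs', h1, h2, h3⟩ := take_decomp τs β.length
  rw [hflat, List.take_left] at h2
  have := bW_le h2 (by
    intro τ' hτ'
    obtain ⟨τ, hτ, hp⟩ := h3 τ' hτ'
    exact le_trans (card_le_of_prefix hp) (hgood τ hτ))
  omega

lemma split_bound : ∀ (τs : List Word), (∀ τ ∈ τs, τ.toFinset.card ≤ 2) →
    ∀ σ τ : Word, σ ++ τ = τs.flatten → bW σ + bW τ ≤ τs.length + 1
  | [], _, σ, τ, h => by
    simp only [List.flatten_nil] at h
    obtain ⟨rfl, rfl⟩ := List.append_eq_nil_iff.1 h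
    simp [bW_nil]
  | t :: rest, hgood, σ, τ, h => by
    simp only [List.flatten_cons] at h
    have hgt : t.toFinset.card ≤ 2 := hgood t (List.mem_cons_self)
    have hgr : ∀ τ ∈ rest, τ.toFinset.card ≤ 2 :=
      fun x hx => hgood x (List.mem_cons_of_mem _ hx)
    by_cases hle : σ.length ≤ t.length
    · have hσ : σ = t.take σ.length := by
        have := congrArg (List.take σ.length) h
        rwa [List.take_left, List.take_append,
          Nat.sub_eq_zero_of_le hle, List.take_zero, List.append_nil] at this
      have hτ : τ = t.drop σ.length ++ rest.flatten := by
        have := congrArg (List.drop σ.length) h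
        rwa [List.drop_left, List.drop_append,
          Nat.sub_eq_zero_of_le hle, List.drop_zero] at this
      have b1 : bW σ ≤ 1 := bW_single (by
        rw [hσ]; exact le_trans (card_le_of_prefix (List.take_prefix _ _)) hgt)
      have b2 : bW τ ≤ 1 + rest.length := by
        rw [hτ]
        have := bW_append (t.drop σ.length) rest.flatten
        have b3 : bW (t.drop σ.length) ≤ 1 := bW_single (by
          refine le_trans (Finset.card_le_card ?_) hgt
          intro x hx
          exact List.mem_toFinset.2 ((List.drop_subset _ _) (List.mem_toFinset.1 hx)))
        have b4 : bW rest.flatten ≤ rest.length := bW_le rfl hgr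
        omega
      simp only [List.length_cons]; omega
    · have ht : t = σ.take t.length := by
        have := congrArg (List.take t.length) h
        rw [List.take_left, List.take_append,
          Nat.sub_eq_zero_of_le (by omega), List.take_zero, List.append_nil] at this
        exact this.symm
      have hσ : σ = t ++ σ.drop t.length := by
        conv_lhs => rw [← List.take_append_drop t.length σ, ← ht]
      have hrec : σ.drop t.length ++ τ = rest.flatten := by
        apply List.append_cancel_left (as := t)
        rw [← List.append_assoc, ← hσ, h]
      have ih := split_bound rest hgr (σ.drop t.length) τ hrec
      have b2 : bW t ≤ 1 := bW_single hgt
      have b1 : bW σ ≤ bW t + bW (σ.drop t.length) := by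
        calc bW σ = bW (t ++ σ.drop t.length) := by rw [← hσ]
          _ ≤ _ := bW_append _ _
      simp only [List.length_cons]; omega
  termination_by τs => τs.length

lemma bW_superadd (σ τ : Word) : bW σ + bW τ ≤ bW (σ ++ τ) + 1 := by
  obtain ⟨τs, hlen, hflat, hgood⟩ := bW_mem (σ ++ τ)
  have := split_bound τs hgood σ τ hflat.symm
  omega

lemma bW_pos {σ : Word} (h : σ ≠ []) : 1 ≤ bW σ := by
  rcases Nat.eq_zero_or_pos (bW σ) with h0 | h1
  · obtain ⟨τs, hlen, hflat, -⟩ := bW_mem σ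
    rw [h0, List.length_eq_zero_iff] at hlen
    subst hlen
    simp only [List.flatten_nil] at hflat
    exact absurd hflat.symm h
  · exact h1

lemma two_letter_card (i j : Letter) (k : ℕ) :
    ((i :: List.replicate k j).toFinset).card ≤ 2 := by
  have hsub : (i :: List.replicate k j).toFinset ⊆ {i, j} := by
    intro x hx
    simp only [List.mem_toFinset, List.mem_cons, List.mem_replicate] at hx
    rcases hx with rfl | ⟨-, rfl⟩
    · exact Finset.mem_insert_self _ _
    · exact Finset.mem_insert_of_mem (Finset.mem_singleton_self _)
  calc ((i :: List.replicate k j).toFinset).card ≤ ({i, j} : Finset Letter).card :=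
        Finset.card_le_card hsub
    _ ≤ 2 := le_trans (Finset.card_insert_le _ _) (by simp)

lemma bW_adj {σ τ : Word} (h : WordAdj σ τ) : bW τ ≤ bW σ + 1 := by
  obtain ⟨-, β, σ', τ', rfl, rfl, hcase⟩ := h
  rcases hcase with ⟨rfl, hc⟩ | ⟨rfl, hc⟩ | ⟨i, j, k, k', hij, rfl, rfl⟩
  · have h1 := bW_append β τ'
    have h2 := bW_single hc
    simp only [List.append_nil]
    omega
  · simp only [List.append_nil]
    have := bW_prefix β σ'
    omega
  · have h1 := bW_append β (j :: List.replicate k' i)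
    have h2 := bW_single (two_letter_card j i k')
    have h3 := bW_prefix β (i :: List.replicate k j)
    omega

lemma bW_le_walk {t : ℕ} {σ τ : Word} (p : (Gt t).Walk σ τ) :
    bW σ ≤ bW τ + p.length := by
  induction p with
  | nil => simp
  | cons h p ih =>
    have hs : _ ∧ _ ∧ WordAdj _ _ := h.symm
    have h2 := bW_adj hs.2.2
    simp only [SimpleGraph.Walk.length_cons]
    omega

lemma exists_walk_decomp {t : ℕ} (τs : List Word) :
    (∀ τ ∈ τs, τ.toFinset.card ≤ 2) → τs.flatten.length ≤ t →
    ∃ p : (Gt t).Walk τs.flatten [], p.length ≤ τs.length := by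
  induction τs using List.reverseRecOn with
  | nil => exact fun _ _ => ⟨SimpleGraph.Walk.nil, by simp⟩
  | append_singleton τs a ih =>
    intro hgood hlen
    have hflat : (τs ++ [a]).flatten = τs.flatten ++ a := by simp
    have hgood' : ∀ τ ∈ τs, τ.toFinset.card ≤ 2 :=
      fun x hx => hgood x (List.mem_append_left _ hx)
    have hlen2 : τs.flatten.length + a.length ≤ t := by
      rw [hflat] at hlen; simpa using hlen
    obtain ⟨p, hp⟩ := ih hgood' (by omega)
    by_cases ha : a = []
    · subst ha
      refine ⟨p.copy (by simp [hflat]) rfl, ?_⟩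
      rw [SimpleGraph.Walk.length_copy]
      simp only [List.length_append, List.length_cons, List.length_nil]
      omega
    · have hadj : (Gt t).Adj ((τs ++ [a]).flatten) τs.flatten := by
        show _ ∧ _ ∧ WordAdj _ _
        refine ⟨by rw [hflat]; simpa using hlen2, by omega, ?_, τs.flatten, a, [], hflat, by simp, ?_⟩
        · rw [hflat]
          intro hcontra
          have := congrArg List.length hcontra
          simp at this
          exact ha this
        · exact Or.inr (Or.inl ⟨rfl, hgood a (by simp)⟩)
      exact ⟨SimpleGraph.Walk.cons hadj p, by
        simp only [SimpleGraph.Walk.length_cons, List.length_append, List.length_cons,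
          List.length_nil]
        omega⟩

lemma dist_eq_bW {t : ℕ} {σ : Word} (h : σ.length ≤ t) : (Gt t).dist σ [] = bW σ := by
  obtain ⟨τs, hlen, hflat, hgood⟩ := bW_mem σ
  obtain ⟨p, hp⟩ := exists_walk_decomp (t := t) τs hgood (by rw [hflat]; exact h)
  have hle : (Gt t).dist σ [] ≤ bW σ := by
    have := SimpleGraph.dist_le (p.copy hflat rfl)
    rw [SimpleGraph.Walk.length_copy] at this
    omega
  have hreach : (Gt t).Reachable σ [] := ⟨p.copy hflat rfl⟩
  obtain ⟨q, hq⟩ := hreach.exists_walk_length_eq_dist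
  have := bW_le_walk q
  rw [bW_nil] at this
  omega

lemma Lw_eq (σ : Word) : Lw σ = bW σ - 1 := by
  unfold Lw dW
  split
  · subst ‹σ = []›; rw [bW_nil]
  · rw [dist_eq_bW le_rfl]

lemma Lw_superadd (σ τ : Word) : Lw σ + Lw τ ≤ Lw (σ ++ τ) := by
  rcases eq_or_ne σ [] with rfl | hσ
  · simp [Lw_eq, bW_nil]
  rcases eq_or_ne τ [] with rfl | hτ
  · simp [Lw_eq, bW_nil]
  have h1 := bW_superadd σ τ
  have h2 := bW_pos hσ
  have h3 := bW_pos hτ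
  rw [Lw_eq, Lw_eq, Lw_eq]
  omega

lemma Lw_le_length (σ : Word) : Lw σ ≤ σ.length := by
  rw [Lw_eq]
  have := bW_le_length σ
  omega

lemma card_letter_fun (n : ℕ) : Fintype.card (Fin n → Letter) = 3 ^ n := by
  simp [Fintype.card_fun]

lemma sum_superadd (m n : ℕ) :
    (∑ v : Fin m → Letter, (Lw (List.ofFn v) : ℝ)) * 3 ^ n
      + (∑ w : Fin n → Letter, (Lw (List.ofFn w) : ℝ)) * 3 ^ m
    ≤ ∑ u : Fin (m + n) → Letter, (Lw (List.ofFn u) : ℝ) := by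
  have hsum : ∑ u : Fin (m + n) → Letter, (Lw (List.ofFn u) : ℝ)
      = ∑ p : (Fin m → Letter) × (Fin n → Letter),
          (Lw (List.ofFn p.1 ++ List.ofFn p.2) : ℝ) := by
    rw [← Fintype.sum_equiv (Fin.appendEquiv (α := Letter) m n)
      (fun p => (Lw (List.ofFn p.1 ++ List.ofFn p.2) : ℝ))
      (fun u => (Lw (List.ofFn u) : ℝ)) (fun p => by
        simp [Fin.appendEquiv, List.ofFn_fin_append])]
  rw [hsum]
  have hle : ∑ p : (Fin m → Letter) × (Fin n → Letter),
      ((Lw (List.ofFn p.1) : ℝ) + (Lw (List.ofFn p.2) : ℝ))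
      ≤ ∑ p : (Fin m → Letter) × (Fin n → Letter),
          (Lw (List.ofFn p.1 ++ List.ofFn p.2) : ℝ) := by
    apply Finset.sum_le_sum
    intro p _
    have := Lw_superadd (List.ofFn p.1) (List.ofFn p.2)
    exact_mod_cast this
  refine le_trans (le_of_eq ?_) hle
  rw [Fintype.sum_prod_type]
  simp only [Finset.sum_add_distrib, Finset.sum_const, Finset.card_univ, nsmul_eq_mul,
    card_letter_fun]
  rw [← Finset.mul_sum]
  push_cast
  ring

lemma alphaBar_superadd (m n : ℕ) : alphaBar m + alphaBar n ≤ alphaBar (m + n) := by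
  have h3m : (0:ℝ) < 3 ^ m := by positivity
  have h3n : (0:ℝ) < 3 ^ n := by positivity
  have key := sum_superadd m n
  unfold alphaBar
  rw [pow_add, div_add_div _ _ (ne_of_gt h3m) (ne_of_gt h3n)]
  gcongr
  linarith [key]

lemma alphaBar_nonneg (m : ℕ) : 0 ≤ alphaBar m := by
  unfold alphaBar
  apply div_nonneg _ (by positivity)
  exact Finset.sum_nonneg fun v _ => by positivity

lemma alphaBar_le (m : ℕ) : alphaBar m ≤ m := by
  unfold alphaBar
  rw [div_le_iff₀ (by positivity)]
  calc ∑ v : Fin m → Letter, (Lw (List.ofFn v) : ℝ)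
      ≤ ∑ _v : Fin m → Letter, (m : ℝ) := by
        apply Finset.sum_le_sum
        intro v _
        have h1 := Lw_le_length (List.ofFn v)
        rw [List.length_ofFn] at h1
        exact_mod_cast h1
    _ = (m : ℝ) * 3 ^ m := by
        rw [Finset.sum_const, Finset.card_univ, card_letter_fun, nsmul_eq_mul]
        push_cast
        ring

end AlphaAux

/-- The sequence `ᾱ_m/m` converges as `m → ∞`, its limit is finite, and the limit equals
`sup_{m ≥ 1} ᾱ_m/m`. -/
theorem alphaBar_div_tendsto_sup :
    BddAbove {x : ℝ | ∃ m : ℕ, 1 ≤ m ∧ x = alphaBar m / m} ∧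
    Tendsto (fun m : ℕ => alphaBar m / m) atTop
      (nhds (sSup {x : ℝ | ∃ m : ℕ, 1 ≤ m ∧ x = alphaBar m / m})) := by
  set S := {x : ℝ | ∃ m : ℕ, 1 ≤ m ∧ x = alphaBar m / m} with hS
  have hratio : ∀ m : ℕ, 1 ≤ m → alphaBar m / m ≤ 1 := by
    intro m hm
    have hmpos : (0:ℝ) < m := by exact_mod_cast hm
    rw [div_le_one hmpos]
    exact AlphaAux.alphaBar_le m
  have hub : ∀ x ∈ S, x ≤ 1 := by
    rintro x ⟨m, hm, rfl⟩
    exact hratio m hm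
  have hbdd : BddAbove S := ⟨1, hub⟩
  refine ⟨hbdd, ?_⟩
  have hsub : Subadditive (fun n : ℕ => -alphaBar n) := by
    intro m n
    have := AlphaAux.alphaBar_superadd m n
    simp only
    linarith
  have hlb : ∀ n : ℕ, -1 ≤ -alphaBar n / (n : ℝ) := by
    intro n
    rcases Nat.eq_zero_or_pos n with rfl | hn
    · simp
    · have := hratio n hn
      rw [neg_div]
      linarith
  have hbddb : BddBelow (Set.range fun n : ℕ => -alphaBar n / (n : ℝ)) := by
    refine ⟨-1, ?_⟩
    rintro x ⟨n, rfl⟩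
    exact hlb n
  have htend := hsub.tendsto_lim hbddb
  have himg : ((fun n : ℕ => -alphaBar n / (n : ℝ)) '' Set.Ici 1) = -S := by
    ext x
    constructor
    · rintro ⟨n, hn, rfl⟩
      rw [Set.mem_neg]
      exact ⟨n, hn, by simp [neg_div]⟩
    · rintro hx
      rw [Set.mem_neg] at hx
      obtain ⟨m, hm, hxm⟩ := hx
      exact ⟨m, hm, by simp only [neg_div]; linarith [hxm]⟩
  have hlim : hsub.lim = -sSup S := by
    rw [Subadditive.lim, himg, Real.sInf_def, neg_neg]
  have := htend.neg
  rw [hlim, neg_neg] at this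
  convert this using 2 with n
  simp [neg_div]
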